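/- arXiv:1304.1339 — 2 statements merged into one kernel-verified Lean document; each statement's English description precedes it below -/
import Mathlib

section
/- Let ψ be an n-qubit state all of whose amplitudes are real and nonnegative (ψ x ≥ 0 for all x), and let ψ' be an n-qubit state with |ψ' x| = ψ x for all x. Then Λ_max(ψ') ≤ Λ_max(ψ), and hence E_G(ψ') ≥ E_G(ψ). (The phase-modulus argument that is the key step in the proof of the double semion theorem: multiplying amplitudes of a nonnegative state by arbitrary phases cannot increase the maximal product overlap.) -/
open scoped BigOperators
open scoped Classical

noncomputable section

namespace GeomEnt

def qInner {n : ℕ} (φ ψ : (Fin n → ZMod 2) → ℂ) : ℂ :=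
  ∑ x : Fin n → ZMod 2, (starRingEnd ℂ) (φ x) * ψ x

def IsState {n : ℕ} (ψ : (Fin n → ZMod 2) → ℂ) : Prop :=
  ∑ x : Fin n → ZMod 2, ‖ψ x‖ ^ 2 = 1

def IsProductState {n : ℕ} (Φ : (Fin n → ZMod 2) → ℂ) : Prop :=
  ∃ φ : Fin n → ZMod 2 → ℂ,
    (∀ i, ‖φ i 0‖ ^ 2 + ‖φ i 1‖ ^ 2 = 1) ∧
    ∀ x, Φ x = ∏ i, φ i (x i)

def LambdaMax {n : ℕ} (ψ : (Fin n → ZMod 2) → ℂ) : ℝ :=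
  sSup { r : ℝ | ∃ Φ, IsProductState Φ ∧ r = ‖qInner Φ ψ‖ }

def EG {n : ℕ} (ψ : (Fin n → ZMod 2) → ℂ) : ℝ :=
  - Real.logb 2 (LambdaMax ψ ^ 2)

lemma sum_zmod2 (f : ZMod 2 → ℝ) : ∑ b : ZMod 2, f b = f 0 + f 1 := by
  show ∑ b : Fin 2, f b = _
  exact Fin.sum_univ_two f

/-- The squared norm of a product state is 1. -/
lemma prod_state_norm {n : ℕ} {Φ : (Fin n → ZMod 2) → ℂ} (h : IsProductState Φ) :
    ∑ x : Fin n → ZMod 2, ‖Φ x‖ ^ 2 = 1 := by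
  obtain ⟨φ, hφ, hΦ⟩ := h
  have key : ∏ i : Fin n, ∑ b : ZMod 2, ‖φ i b‖ ^ 2
      = ∑ x : Fin n → ZMod 2, ∏ i : Fin n, ‖φ i (x i)‖ ^ 2 := by
    rw [Finset.prod_univ_sum (fun _ => Finset.univ) (fun i b => ‖φ i b‖ ^ 2)]
    rw [Fintype.piFinset_univ]
  have h1 : ∀ x : Fin n → ZMod 2, ‖Φ x‖ ^ 2
      = ∏ i : Fin n, ‖φ i (x i)‖ ^ 2 := by
    intro x
    rw [hΦ x, norm_prod, ← Finset.prod_pow]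
  calc ∑ x : Fin n → ZMod 2, ‖Φ x‖ ^ 2
      = ∑ x : Fin n → ZMod 2, ∏ i : Fin n, ‖φ i (x i)‖ ^ 2 := by
        exact Finset.sum_congr rfl fun x _ => h1 x
    _ = ∏ i : Fin n, ∑ b : ZMod 2, ‖φ i b‖ ^ 2 := key.symm
    _ = 1 := by
        rw [Finset.prod_eq_one]
        intro i _
        rw [sum_zmod2]
        exact hφ i

/-- Any overlap with a state is at most 1. -/
lemma overlap_le_one {n : ℕ} {Φ ψ : (Fin n → ZMod 2) → ℂ}
    (hΦ : IsProductState Φ) (hψ : IsState ψ) :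
    ‖qInner Φ ψ‖ ≤ 1 := by
  have h1 : ‖qInner Φ ψ‖ ≤
      ∑ x : Fin n → ZMod 2, ‖Φ x‖ * ‖ψ x‖ := by
    refine (norm_sum_le _ _).trans_eq ?_
    exact Finset.sum_congr rfl fun x _ => by rw [norm_mul, Complex.norm_conj]
  have h2 : (∑ x : Fin n → ZMod 2, ‖Φ x‖ * ‖ψ x‖) ^ 2 ≤ 1 := by
    have := Finset.sum_mul_sq_le_sq_mul_sq Finset.univ
      (fun x => ‖Φ x‖) (fun x => ‖ψ x‖)
    rwa [prod_state_norm hΦ, hψ, one_mul] at this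
  have h3 : 0 ≤ ∑ x : Fin n → ZMod 2, ‖Φ x‖ * ‖ψ x‖ :=
    Finset.sum_nonneg fun x _ => mul_nonneg (norm_nonneg _) (norm_nonneg _)
  exact h1.trans ((pow_le_one_iff_of_nonneg h3 two_ne_zero).mp h2)

/-- the delta function at x is a product state -/
lemma delta_mem {n : ℕ} (ψ : (Fin n → ZMod 2) → ℂ) (x : Fin n → ZMod 2) :
    ‖ψ x‖ ∈ { r : ℝ | ∃ Φ, IsProductState Φ ∧ r = ‖qInner Φ ψ‖ } := by
  refine ⟨fun y => if y = x then 1 else 0, ⟨fun i b => if b = x i then 1 else 0, ?_, ?_⟩, ?_⟩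
  · intro i
    rcases (by decide : ∀ b : ZMod 2, b = 0 ∨ b = 1) (x i) with h | h <;> simp [h]
  · intro y
    by_cases h : y = x
    · simp [h]
    · obtain ⟨i, hi⟩ := Function.ne_iff.mp h
      show (if y = x then (1:ℂ) else 0) = _
      rw [if_neg h]
      exact (Finset.prod_eq_zero (Finset.mem_univ i) (by simp [hi])).symm
  · unfold qInner
    rw [Finset.sum_eq_single x (fun y _ hy => by simp [hy]) (by simp)]
    simp

/-- if ψ has real nonnegative amplitudes and ψ' has the same moduli
(i.e. ψ' is obtained from ψ by multiplying amplitudes by arbitrary phases), then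
Λ_max(ψ') ≤ Λ_max(ψ), hence E_G(ψ') ≥ E_G(ψ). -/
theorem phase_modulus_argument
    {n : ℕ} (ψ ψ' : (Fin n → ZMod 2) → ℂ)
    (hψstate : IsState ψ) (hψ'state : IsState ψ')
    (hnonneg : ∀ x, ψ x = ((‖ψ x‖ : ℝ) : ℂ))
    (hmod : ∀ x, ‖ψ' x‖ = ‖ψ x‖) :
    LambdaMax ψ' ≤ LambdaMax ψ ∧ EG ψ ≤ EG ψ' := by
  have bdd : ∀ (χ : (Fin n → ZMod 2) → ℂ), IsState χ →
      BddAbove { r : ℝ | ∃ Φ, IsProductState Φ ∧ r = ‖qInner Φ χ‖ } := by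
    intro χ hχ
    exact ⟨1, fun r ⟨Φ, hΦ, hr⟩ => hr ▸ overlap_le_one hΦ hχ⟩
  have hΛnonneg : 0 ≤ LambdaMax ψ :=
    (norm_nonneg _).trans (le_csSup (bdd ψ hψstate) (delta_mem ψ (fun _ => 0)))
  have main : LambdaMax ψ' ≤ LambdaMax ψ := by
    apply Real.sSup_le _ hΛnonneg
    rintro r ⟨Φ, hPS, hr⟩
    obtain ⟨φ, hφn, hΦ⟩ := hPS
    set Φ' : (Fin n → ZMod 2) → ℂ := fun x => ∏ i, ((‖φ i (x i)‖ : ℝ) : ℂ) with hΦ'def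
    have hPS' : IsProductState Φ' := by
      refine ⟨fun i b => ((‖φ i b‖ : ℝ) : ℂ), fun i => ?_, fun x => rfl⟩
      rw [Complex.norm_real, Complex.norm_real,
        norm_norm, norm_norm]
      exact hφn i
    have habs : ∀ x, ‖Φ x‖ = ∏ i, ‖φ i (x i)‖ := fun x => by
      rw [hΦ x, norm_prod]
    have hΦ'x : ∀ x, Φ' x = ((∏ i, ‖φ i (x i)‖ : ℝ) : ℂ) := fun x => by
      rw [hΦ'def, Complex.ofReal_prod]
    have hQ : qInner Φ' ψ
        = ((∑ x : Fin n → ZMod 2, ‖Φ x‖ * ‖ψ x‖ : ℝ) : ℂ) := by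
      rw [qInner, Complex.ofReal_sum]
      refine Finset.sum_congr rfl fun x _ => ?_
      rw [hΦ'x x, Complex.conj_ofReal, habs x, Complex.ofReal_mul]
      rw [hnonneg x, Complex.norm_real, norm_norm]
    have habsQ : ‖qInner Φ' ψ‖
        = ∑ x : Fin n → ZMod 2, ‖Φ x‖ * ‖ψ x‖ := by
      rw [hQ, Complex.norm_real, Real.norm_eq_abs, abs_of_nonneg (Finset.sum_nonneg fun x _ =>
        mul_nonneg (norm_nonneg _) (norm_nonneg _))]
    have hr' : r ≤ ‖qInner Φ' ψ‖ := by
      rw [hr, habsQ]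
      refine (norm_sum_le _ _).trans_eq ?_
      refine Finset.sum_congr rfl fun x _ => ?_
      rw [norm_mul, Complex.norm_conj, hmod x]
    exact hr'.trans (le_csSup (bdd ψ hψstate) ⟨Φ', hPS', rfl⟩)
  refine ⟨main, ?_⟩
  have hx : ∃ x, ψ' x ≠ 0 := by
    by_contra h
    push_neg at h
    simp [IsState, h] at hψ'state
  obtain ⟨x, hx⟩ := hx
  have hpos' : 0 < LambdaMax ψ' :=
    lt_of_lt_of_le (norm_pos_iff.mpr hx) (le_csSup (bdd ψ' hψ'state) (delta_mem ψ' x))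
  have hpos : 0 < LambdaMax ψ := hpos'.trans_le main
  unfold EG
  apply neg_le_neg
  exact (Real.logb_le_logb one_lt_two (pow_pos hpos' 2) (pow_pos hpos 2)).mpr
    (pow_le_pow_left₀ hpos'.le main 2)


end GeomEnt
end
end

section
/- Lemma (reduced density operator): with the setup of the general formalism, for any partition {1,…,m} = A ⊔ B of the parties, the reduced density operator of Ψ on H_A = ⊗_{k∈A} H_k (the partial trace of the rank-one projection onto Ψ over H_B = ⊗_{k∈B} H_k) equals ρ_A = (1/(|𝒢|·|𝒢_Φ|)) · ∑_{u∈𝒢} ∑_{v∈𝒢_Φ(B)} O_A^u |φ_A⟩⟨φ_A| O_A^{v u^{−1}}, where O_A^t = ⊗_{k∈A} O_k^t and φ_A = ⊗_{k∈A} φ_k. -/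
open scoped BigOperators
open scoped Classical

noncomputable section

namespace GenForm

variable {G : Type} [Group G] [Fintype G] {n m : ℕ}
  {ι : Fin m → Type} [∀ k, Fintype (ι k)] [∀ k, DecidableEq (ι k)]

/-- `O` assigns to every party `k` a unitary representation of 𝒢 = G^{×n} on the
(concretely modelled) finite-dimensional Hilbert space H_k = (ι k → ℂ). -/
def IsLocalRep (O : (k : Fin m) → (Fin n → G) → Matrix (ι k) (ι k) ℂ) : Prop :=
  ∀ k : Fin m,
    (∀ t, O k t ∈ Matrix.unitaryGroup (ι k) ℂ) ∧
    O k 1 = 1 ∧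
    ∀ t u, O k (t * u) = O k t * O k u

/-- The product vector Φ = φ₁ ⊗ ⋯ ⊗ φ_m, as an amplitude function. -/
def prodVec (φ : (k : Fin m) → ι k → ℂ) : ((k : Fin m) → ι k) → ℂ :=
  fun x => ∏ k, φ k (x k)

/-- The vector O^t Φ = ⊗_k O_k^t φ_k. -/
def actVec (O : (k : Fin m) → (Fin n → G) → Matrix (ι k) (ι k) ℂ)
    (φ : (k : Fin m) → ι k → ℂ) (t : Fin n → G) : ((k : Fin m) → ι k) → ℂ :=
  fun x => ∏ k, ((O k t).mulVec (φ k)) (x k)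

/-- The vector O_X^t Φ, where the truncated operator acts as O_k^t for k ∈ X and as
the identity elsewhere. -/
def actVecOn (O : (k : Fin m) → (Fin n → G) → Matrix (ι k) (ι k) ℂ)
    (φ : (k : Fin m) → ι k → ℂ) (X : Finset (Fin m)) (t : Fin n → G) :
    ((k : Fin m) → ι k) → ℂ :=
  fun x => ∏ k, if k ∈ X then ((O k t).mulVec (φ k)) (x k) else φ k (x k)

/-- Each local vector O_k^t φ_k and O_k^u φ_k is either equal or orthogonal. -/
def OrthCond (O : (k : Fin m) → (Fin n → G) → Matrix (ι k) (ι k) ℂ)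
    (φ : (k : Fin m) → ι k → ℂ) : Prop :=
  ∀ (k : Fin m) (t u : Fin n → G),
    (O k t).mulVec (φ k) = (O k u).mulVec (φ k) ∨
    ∑ x : ι k, (starRingEnd ℂ) (((O k t).mulVec (φ k)) x) * ((O k u).mulVec (φ k)) x = 0

/-- The global stabiliser 𝒢_Φ = { t : O^t Φ = Φ }. -/
def globalStab (O : (k : Fin m) → (Fin n → G) → Matrix (ι k) (ι k) ℂ)
    (φ : (k : Fin m) → ι k → ℂ) : Set (Fin n → G) :=
  { t | actVec O φ t = prodVec φ }

/-- The local stabiliser 𝒢_Φ(X) = { t : O_X^t Φ = Φ }. -/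
def localStab (O : (k : Fin m) → (Fin n → G) → Matrix (ι k) (ι k) ℂ)
    (φ : (k : Fin m) → ι k → ℂ) (X : Finset (Fin m)) : Set (Fin n → G) :=
  { t | actVecOn O φ X t = prodVec φ }

/-- The symmetrized state Ψ = (|𝒢|·|𝒢_Φ|)^{-1/2} ∑_{t∈𝒢} O^t Φ. -/
def Psi (O : (k : Fin m) → (Fin n → G) → Matrix (ι k) (ι k) ℂ)
    (φ : (k : Fin m) → ι k → ℂ) : ((k : Fin m) → ι k) → ℂ :=
  fun x => (((Real.sqrt ((Fintype.card G) ^ n * Nat.card (globalStab O φ)))⁻¹ : ℝ) : ℂ) *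
    ∑ t : Fin n → G, actVec O φ t x

/-- A product state of the m parties. -/
def IsProd (Φ : ((k : Fin m) → ι k) → ℂ) : Prop :=
  ∃ χ : (k : Fin m) → ι k → ℂ,
    (∀ k, ∑ x : ι k, ‖χ k x‖ ^ 2 = 1) ∧
    ∀ x, Φ x = ∏ k, χ k (x k)

/-- Maximal overlap with product states of the parties. -/
def LMax (ψ : ((k : Fin m) → ι k) → ℂ) : ℝ :=
  sSup { r : ℝ | ∃ Φ, IsProd Φ ∧
    r = ‖∑ x : (k : Fin m) → ι k, (starRingEnd ℂ) (Φ x) * ψ x‖ }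

/-- Geometric entanglement. -/
def EG (ψ : ((k : Fin m) → ι k) → ℂ) : ℝ :=
  - Real.logb 2 (LMax ψ ^ 2)

end GenForm

namespace GenForm

variable {G : Type} [Group G] [Fintype G] {n m : ℕ}
  {ι : Fin m → Type} [∀ k, Fintype (ι k)] [∀ k, DecidableEq (ι k)]

/-- Glue a configuration on the parties in `A` with one on the parties outside `A`. -/
def glue (A : Finset (Fin m)) (xA : (k : { k : Fin m // k ∈ A }) → ι k.1)
    (zB : (k : { k : Fin m // k ∉ A }) → ι k.1) : (k : Fin m) → ι k :=
  fun k => if h : k ∈ A then xA ⟨k, h⟩ else zB ⟨k, h⟩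

/-- The reduced density operator of a state ψ on the parties in `A`: the partial trace
of the rank-one projection |ψ⟩⟨ψ| over the parties outside `A`. -/
def rhoA (ψ : ((k : Fin m) → ι k) → ℂ) (A : Finset (Fin m)) :
    Matrix ((k : { k : Fin m // k ∈ A }) → ι k.1)
      ((k : { k : Fin m // k ∈ A }) → ι k.1) ℂ :=
  Matrix.of fun xA yA =>
    ∑ zB : (k : { k : Fin m // k ∉ A }) → ι k.1,
      ψ (glue A xA zB) * (starRingEnd ℂ) (ψ (glue A yA zB))

/-- The operator O_A^t = ⊗_{k∈A} O_k^t on the parties in `A`. -/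
def OAmat (O : (k : Fin m) → (Fin n → G) → Matrix (ι k) (ι k) ℂ)
    (A : Finset (Fin m)) (t : Fin n → G) :
    Matrix ((k : { k : Fin m // k ∈ A }) → ι k.1)
      ((k : { k : Fin m // k ∈ A }) → ι k.1) ℂ :=
  Matrix.of fun xA yA => ∏ k : { k : Fin m // k ∈ A }, O k.1 t (xA k) (yA k)

/-- The vector φ_A = ⊗_{k∈A} φ_k. -/
def phiA (φ : (k : Fin m) → ι k → ℂ) (A : Finset (Fin m)) :
    ((k : { k : Fin m // k ∈ A }) → ι k.1) → ℂ :=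
  fun xA => ∏ k : { k : Fin m // k ∈ A }, φ k.1 (xA k)


section Helpers

variable {G : Type} [Group G] [Fintype G] {n m : ℕ}
  {ι : Fin m → Type} [∀ k, Fintype (ι k)] [∀ k, DecidableEq (ι k)]
  {O : (k : Fin m) → (Fin n → G) → Matrix (ι k) (ι k) ℂ}
  {φ : (k : Fin m) → ι k → ℂ}

set_option linter.unusedSectionVars false

lemma rep_mulVec (hO : IsLocalRep O) (k : Fin m) (a b : Fin n → G) (w : ι k → ℂ) :
    (O k (a * b)).mulVec w = (O k a).mulVec ((O k b).mulVec w) := by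
  rw [(hO k).2.2, ← Matrix.mulVec_mulVec]

lemma rep_one_mulVec (hO : IsLocalRep O) (k : Fin m) (w : ι k → ℂ) :
    (O k 1).mulVec w = w := by
  rw [(hO k).2.1, Matrix.one_mulVec]

lemma rep_inv_star (hO : IsLocalRep O) (k : Fin m) (s : Fin n → G) :
    O k s⁻¹ = star (O k s) := by
  have h1 : O k s * O k s⁻¹ = 1 := by
    rw [← (hO k).2.2, mul_inv_cancel, (hO k).2.1]
  have h2 : star (O k s) * O k s = 1 := Matrix.mem_unitaryGroup_iff'.mp ((hO k).1 s)
  calc O k s⁻¹ = 1 * O k s⁻¹ := (one_mul _).symm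
    _ = star (O k s) * (O k s * O k s⁻¹) := by rw [← h2, mul_assoc]
    _ = star (O k s) := by rw [h1, mul_one]

lemma inner_mulVec {α : Type} [Fintype α] [DecidableEq α] (M N : Matrix α α ℂ)
    (h : star M * N = 1) (v w : α → ℂ) :
    ∑ x, (starRingEnd ℂ) ((M.mulVec v) x) * ((N.mulVec w) x)
      = ∑ p, (starRingEnd ℂ) (v p) * w p := by
  have key : dotProduct (star (M.mulVec v)) (N.mulVec w)
      = dotProduct (star v) w := by
    rw [Matrix.star_mulVec, Matrix.dotProduct_mulVec, Matrix.vecMul_vecMul,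
      ← Matrix.star_eq_conjTranspose, h, Matrix.vecMul_one]
  simp only [dotProduct, Pi.star_apply] at key
  simpa only [starRingEnd_apply] using key

lemma ip_self (hφ : ∀ k, ∑ x : ι k, ‖φ k x‖ ^ 2 = 1) (k : Fin m) :
    ∑ x : ι k, (starRingEnd ℂ) (φ k x) * φ k x = 1 := by
  have h : ∀ z : ℂ, (starRingEnd ℂ) z * z = ((‖z‖ ^ 2 : ℝ) : ℂ) := by
    intro z
    rw [Complex.sq_norm]
    exact Complex.normSq_eq_conj_mul_self.symm
  simp_rw [h]
  rw [← Complex.ofReal_sum, hφ k, Complex.ofReal_one]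

lemma sum_pi_prod {β : Type} [Fintype β] [DecidableEq β] {κ : β → Type} [∀ b, Fintype (κ b)]
    (f : (b : β) → κ b → ℂ) :
    ∑ x : (b : β) → κ b, ∏ b, f b (x b) = ∏ b, ∑ w, f b w := (Fintype.prod_sum f).symm

lemma prod_ite_delta {β : Type} [Fintype β] (P : β → Prop) :
    (∏ b : β, if P b then (1:ℂ) else 0) = if (∀ b, P b) then 1 else 0 := by
  by_cases h : ∀ b, P b
  · rw [if_pos h]; exact Finset.prod_eq_one fun b _ => if_pos (h b)
  · rw [if_neg h]; push_neg at h; obtain ⟨b, hb⟩ := h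
    exact Finset.prod_eq_zero (Finset.mem_univ b) (if_neg hb)

lemma ip_act_delta (hO : IsLocalRep O) (hφ : ∀ k, ∑ x : ι k, ‖φ k x‖ ^ 2 = 1)
    (horth : OrthCond O φ) (k : Fin m) (t u : Fin n → G) :
    ∑ x : ι k, (starRingEnd ℂ) (((O k t).mulVec (φ k)) x) * ((O k u).mulVec (φ k)) x
      = if (O k t).mulVec (φ k) = (O k u).mulVec (φ k) then 1 else 0 := by
  by_cases h : (O k t).mulVec (φ k) = (O k u).mulVec (φ k)
  · rw [if_pos h, h,
      inner_mulVec _ _ (Matrix.mem_unitaryGroup_iff'.mp ((hO k).1 u))]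
    exact ip_self hφ k
  · rw [if_neg h]
    rcases horth k t u with he | h0
    · exact absurd he h
    · exact h0

lemma conj_mulVec_apply (hO : IsLocalRep O) (k : Fin m) (s : Fin n → G) (y : ι k) :
    (starRingEnd ℂ) (((O k s).mulVec (φ k)) y)
      = ∑ q, (starRingEnd ℂ) (φ k q) * (O k s⁻¹) q y := by
  rw [rep_inv_star hO]
  simp only [Matrix.mulVec, dotProduct, map_sum, map_mul, Matrix.star_apply,
    starRingEnd_apply]
  exact Finset.sum_congr rfl fun q _ => by rw [mul_comm]

lemma mem_localStab_iff (hO : IsLocalRep O)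
    (hφ : ∀ k, ∑ x : ι k, ‖φ k x‖ ^ 2 = 1) (horth : OrthCond O φ)
    (X : Finset (Fin m)) (v : Fin n → G) :
    v ∈ localStab O φ X ↔ ∀ k ∈ X, (O k v).mulVec (φ k) = φ k := by
  constructor
  · intro hv
    by_contra hc
    push_neg at hc
    obtain ⟨k₀, hk₀, hne⟩ := hc
    have h0 : ∑ x : ι k₀, (starRingEnd ℂ) (((O k₀ v).mulVec (φ k₀)) x) * φ k₀ x = 0 := by
      rcases horth k₀ v 1 with he | h0
      · rw [rep_one_mulVec hO] at he; exact absurd he hne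
      · rw [rep_one_mulVec hO] at h0; exact h0
    have hv' : actVecOn O φ X v = prodVec φ := hv
    have e1 : ∑ x : (k : Fin m) → ι k,
        (starRingEnd ℂ) (actVecOn O φ X v x) * prodVec φ x = 1 := by
      rw [hv']
      have h2 : ∀ x : (k : Fin m) → ι k, (starRingEnd ℂ) (prodVec φ x) * prodVec φ x
          = ∏ k, ((starRingEnd ℂ) (φ k (x k)) * φ k (x k)) := by
        intro x; rw [prodVec, map_prod, ← Finset.prod_mul_distrib]
      simp_rw [h2]
      rw [sum_pi_prod (f := fun k w => (starRingEnd ℂ) (φ k w) * φ k w)]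
      exact Finset.prod_eq_one fun k _ => ip_self hφ k
    have e0 : ∑ x : (k : Fin m) → ι k,
        (starRingEnd ℂ) (actVecOn O φ X v x) * prodVec φ x = 0 := by
      have h2 : ∀ x : (k : Fin m) → ι k, (starRingEnd ℂ) (actVecOn O φ X v x) * prodVec φ x
          = ∏ k, ((starRingEnd ℂ)
              (if k ∈ X then ((O k v).mulVec (φ k)) (x k) else φ k (x k)) * φ k (x k)) := by
        intro x
        simp only [actVecOn, prodVec]
        rw [map_prod, ← Finset.prod_mul_distrib]
      simp_rw [h2]
      rw [sum_pi_prod (f := fun k w =>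
        (starRingEnd ℂ) (if k ∈ X then ((O k v).mulVec (φ k)) w else φ k w) * φ k w)]
      apply Finset.prod_eq_zero (Finset.mem_univ k₀)
      simp only [if_pos hk₀]
      exact h0
    exact one_ne_zero (e1.symm.trans e0)
  · intro h
    show actVecOn O φ X v = prodVec φ
    funext x
    simp only [actVecOn, prodVec]
    refine Finset.prod_congr rfl fun k _ => ?_
    by_cases hk : k ∈ X
    · rw [if_pos hk, h k hk]
    · rw [if_neg hk]

lemma cond_iff (hO : IsLocalRep O) (s t : Fin n → G) (X : Finset (Fin m)) :
    (∀ k ∈ X, (O k s).mulVec (φ k) = (O k t).mulVec (φ k)) ↔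
    (∀ k ∈ X, (O k (s⁻¹ * t)).mulVec (φ k) = φ k) := by
  constructor
  · intro h k hk
    rw [rep_mulVec hO, ← h k hk, ← rep_mulVec hO, inv_mul_cancel, rep_one_mulVec hO]
  · intro h k hk
    calc (O k s).mulVec (φ k)
        = (O k s).mulVec ((O k (s⁻¹ * t)).mulVec (φ k)) := by rw [h k hk]
      _ = (O k (s * (s⁻¹ * t))).mulVec (φ k) := (rep_mulVec hO k s (s⁻¹ * t) (φ k)).symm
      _ = (O k t).mulVec (φ k) := by rw [mul_inv_cancel_left]

lemma triple_entry {α : Type} [Fintype α] (M N : Matrix α α ℂ) (a b : α → ℂ) (x y : α) :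
    (M * Matrix.vecMulVec a b * N) x y = (∑ p, M x p * a p) * (∑ j, b j * N j y) := by
  rw [Finset.sum_mul_sum]
  simp only [Matrix.mul_apply, Matrix.vecMulVec_apply, Finset.sum_mul]
  rw [Finset.sum_comm]
  exact Finset.sum_congr rfl fun j _ => Finset.sum_congr rfl fun p _ => by ring

end Helpers

section Helpers2

variable {G : Type} [Group G] [Fintype G] {n m : ℕ}
  {ι : Fin m → Type} [∀ k, Fintype (ι k)] [∀ k, DecidableEq (ι k)]
  {O : (k : Fin m) → (Fin n → G) → Matrix (ι k) (ι k) ℂ}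
  {φ : (k : Fin m) → ι k → ℂ}

set_option linter.unusedSectionVars false

lemma glue_prod (A : Finset (Fin m)) (f : (k : Fin m) → ι k → ℂ)
    (xA : (k : { k : Fin m // k ∈ A }) → ι k.1)
    (zB : (k : { k : Fin m // k ∉ A }) → ι k.1) :
    ∏ k, f k (glue A xA zB k)
      = (∏ k : { k : Fin m // k ∈ A }, f k.1 (xA k))
        * ∏ k : { k : Fin m // k ∉ A }, f k.1 (zB k) := by
  rw [← Finset.prod_mul_prod_compl A (fun k => f k (glue A xA zB k))]
  congr 1
  · rw [Finset.prod_subtype A (fun x => Iff.rfl) (fun k => f k (glue A xA zB k))]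
    exact Finset.prod_congr rfl fun k _ => by rw [glue, dif_pos k.2]
  · rw [Finset.prod_subtype Aᶜ (fun x => Finset.mem_compl) (fun k => f k (glue A xA zB k))]
    exact Finset.prod_congr rfl fun k _ => by rw [glue, dif_neg k.2]

lemma rhoA_scaled_entry (A : Finset (Fin m)) (c : ℝ)
    (F : (Fin n → G) → ((k : Fin m) → ι k) → ℂ)
    (x y : (k : { k : Fin m // k ∈ A }) → ι k.1) :
    rhoA (fun z => (c : ℂ) * ∑ t : Fin n → G, F t z) A x y
      = (c : ℂ) * (c : ℂ) * ∑ t : Fin n → G, ∑ s : Fin n → G,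
          ∑ zB : (k : { k : Fin m // k ∉ A }) → ι k.1,
            F t (glue A x zB) * (starRingEnd ℂ) (F s (glue A y zB)) := by
  simp only [rhoA, Matrix.of_apply]
  have h1 : ∀ zB : (k : { k : Fin m // k ∉ A }) → ι k.1,
      ((c:ℂ) * ∑ t, F t (glue A x zB))
        * (starRingEnd ℂ) ((c:ℂ) * ∑ s, F s (glue A y zB))
      = (c:ℂ) * (c:ℂ) * ∑ t, ∑ s,
          F t (glue A x zB) * (starRingEnd ℂ) (F s (glue A y zB)) := by
    intro zB
    rw [map_mul, Complex.conj_ofReal, map_sum, mul_mul_mul_comm, Finset.sum_mul_sum]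
  simp_rw [h1]
  rw [← Finset.mul_sum]
  congr 1
  rw [Finset.sum_comm]
  exact Finset.sum_congr rfl fun t _ => Finset.sum_comm

lemma sum_glue_factor (hO : IsLocalRep O)
    (hφ : ∀ k, ∑ x : ι k, ‖φ k x‖ ^ 2 = 1) (horth : OrthCond O φ)
    (A : Finset (Fin m)) (t s : Fin n → G)
    (x y : (k : { k : Fin m // k ∈ A }) → ι k.1) :
    ∑ zB : (k : { k : Fin m // k ∉ A }) → ι k.1,
        actVec O φ t (glue A x zB) * (starRingEnd ℂ) (actVec O φ s (glue A y zB))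
      = ((∏ k : { k : Fin m // k ∈ A }, ((O k.1 t).mulVec (φ k.1)) (x k))
          * ∏ k : { k : Fin m // k ∈ A }, (starRingEnd ℂ) (((O k.1 s).mulVec (φ k.1)) (y k)))
        * (if (∀ k : { k : Fin m // k ∉ A },
              (O k.1 s).mulVec (φ k.1) = (O k.1 t).mulVec (φ k.1)) then 1 else 0) := by
  have hsplit : ∀ zB : (k : { k : Fin m // k ∉ A }) → ι k.1,
      actVec O φ t (glue A x zB) * (starRingEnd ℂ) (actVec O φ s (glue A y zB))
      = ((∏ k : { k : Fin m // k ∈ A }, ((O k.1 t).mulVec (φ k.1)) (x k))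
          * ∏ k : { k : Fin m // k ∈ A }, (starRingEnd ℂ) (((O k.1 s).mulVec (φ k.1)) (y k)))
        * ∏ k : { k : Fin m // k ∉ A },
            (((O k.1 t).mulVec (φ k.1)) (zB k)
              * (starRingEnd ℂ) (((O k.1 s).mulVec (φ k.1)) (zB k))) := by
    intro zB
    simp only [actVec]
    rw [glue_prod A (fun k => (O k t).mulVec (φ k)) x zB,
      glue_prod A (fun k => (O k s).mulVec (φ k)) y zB,
      map_mul, map_prod, map_prod, mul_mul_mul_comm]
    congr 1
    exact Finset.prod_mul_distrib.symm
  simp_rw [hsplit]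
  rw [← Finset.mul_sum]
  congr 1
  rw [sum_pi_prod (f := fun (k : { k : Fin m // k ∉ A }) w =>
    ((O k.1 t).mulVec (φ k.1)) w * (starRingEnd ℂ) (((O k.1 s).mulVec (φ k.1)) w))]
  by_cases hcond : ∀ k : { k : Fin m // k ∉ A },
      (O k.1 s).mulVec (φ k.1) = (O k.1 t).mulVec (φ k.1)
  · rw [if_pos hcond]
    refine Finset.prod_eq_one fun k _ => ?_
    rw [hcond k]
    have h1 := ip_act_delta hO hφ horth k.1 t t
    rw [if_pos rfl] at h1
    rw [← h1]
    exact Finset.sum_congr rfl fun w _ => mul_comm _ _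
  · rw [if_neg hcond]
    push_neg at hcond
    obtain ⟨k₀, hk₀⟩ := hcond
    apply Finset.prod_eq_zero (Finset.mem_univ k₀)
    have h1 := ip_act_delta hO hφ horth k₀.1 s t
    rw [if_neg hk₀] at h1
    rw [← h1]
    exact Finset.sum_congr rfl fun w _ => mul_comm _ _

lemma OA_mulVec_phiA (A : Finset (Fin m)) (u : Fin n → G)
    (x : (k : { k : Fin m // k ∈ A }) → ι k.1) :
    ∑ p : (k : { k : Fin m // k ∈ A }) → ι k.1, OAmat O A u x p * phiA φ A p
      = ∏ k : { k : Fin m // k ∈ A }, ((O k.1 u).mulVec (φ k.1)) (x k) := by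
  simp only [OAmat, Matrix.of_apply, phiA]
  have h1 : ∀ p : (k : { k : Fin m // k ∈ A }) → ι k.1,
      (∏ k : { k : Fin m // k ∈ A }, O k.1 u (x k) (p k))
        * ∏ k : { k : Fin m // k ∈ A }, φ k.1 (p k)
      = ∏ k : { k : Fin m // k ∈ A }, (O k.1 u (x k) (p k) * φ k.1 (p k)) :=
    fun p => (Finset.prod_mul_distrib).symm
  simp_rw [h1]
  rw [sum_pi_prod (f := fun (k : { k : Fin m // k ∈ A }) w => O k.1 u (x k) w * φ k.1 w)]
  refine Finset.prod_congr rfl fun k _ => ?_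
  simp [Matrix.mulVec, dotProduct]

lemma phiA_vecMul_OA (A : Finset (Fin m)) (w : Fin n → G)
    (y : (k : { k : Fin m // k ∈ A }) → ι k.1) :
    ∑ j : (k : { k : Fin m // k ∈ A }) → ι k.1,
        (starRingEnd ℂ) (phiA φ A j) * OAmat O A w j y
      = ∏ k : { k : Fin m // k ∈ A },
          ∑ q : ι k.1, (starRingEnd ℂ) (φ k.1 q) * O k.1 w q (y k) := by
  simp only [OAmat, Matrix.of_apply, phiA, map_prod]
  have h1 : ∀ j : (k : { k : Fin m // k ∈ A }) → ι k.1,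
      (∏ k : { k : Fin m // k ∈ A }, (starRingEnd ℂ) (φ k.1 (j k)))
        * ∏ k : { k : Fin m // k ∈ A }, O k.1 w (j k) (y k)
      = ∏ k : { k : Fin m // k ∈ A }, ((starRingEnd ℂ) (φ k.1 (j k)) * O k.1 w (j k) (y k)) :=
    fun j => (Finset.prod_mul_distrib).symm
  simp_rw [h1]
  exact sum_pi_prod (f := fun (k : { k : Fin m // k ∈ A }) q =>
    (starRingEnd ℂ) (φ k.1 q) * O k.1 w q (y k))

end Helpers2

/-- Lemma, reduced density operator: for any partition of the parties
into A and B = Aᶜ,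
ρ_A = (1/(|𝒢|·|𝒢_Φ|)) ∑_{u∈𝒢} ∑_{v∈𝒢_Φ(B)} O_A^u |φ_A⟩⟨φ_A| O_A^{v u⁻¹}. -/
theorem reduced_density_formula
    (O : (k : Fin m) → (Fin n → G) → Matrix (ι k) (ι k) ℂ) (hO : IsLocalRep O)
    (φ : (k : Fin m) → ι k → ℂ) (hφ : ∀ k, ∑ x : ι k, ‖φ k x‖ ^ 2 = 1)
    (horth : OrthCond O φ)
    (A : Finset (Fin m)) :
    rhoA (Psi O φ) A =
      (((((Fintype.card G : ℝ) ^ n * (Nat.card (globalStab O φ) : ℝ))⁻¹ : ℝ)) : ℂ) •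
        ∑ u : Fin n → G,
          ∑ v ∈ Finset.univ.filter (· ∈ localStab O φ Aᶜ),
            OAmat O A u *
              Matrix.vecMulVec (phiA φ A) (fun y => (starRingEnd ℂ) (phiA φ A y)) *
              OAmat O A (v * u⁻¹) := by
  have hsub : ∀ (C : Fin m → Prop),
      (∀ k : { k : Fin m // k ∉ A }, C k.1) ↔ ∀ k ∈ Aᶜ, C k := by
    intro C
    constructor
    · intro h k hk
      exact h ⟨k, Finset.mem_compl.mp hk⟩
    · intro h k
      exact h k.1 (Finset.mem_compl.mpr k.2)
  have reidx : ∀ (t : Fin n → G) (F : (Fin n → G) → ℂ),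
      ∑ s : Fin n → G, F s = ∑ v : Fin n → G, F (t * v⁻¹) := by
    intro t F
    refine (Fintype.sum_bijective (fun v : Fin n → G => t * v⁻¹)
      ⟨?_, ?_⟩ (fun v => F (t * v⁻¹)) F (fun v => rfl)).symm
    · intro a b hab
      exact inv_injective (mul_left_cancel hab)
    · intro s
      refine ⟨s⁻¹ * t, ?_⟩
      show t * (s⁻¹ * t)⁻¹ = s
      rw [mul_inv_rev, inv_inv, mul_inv_cancel_left]
  apply Matrix.ext
  intro x y
  have hqnn : (0:ℝ) ≤ (Fintype.card G : ℝ) ^ n * (Nat.card (globalStab O φ) : ℝ) := by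
    positivity
  have hcc : (((Real.sqrt ((Fintype.card G) ^ n * Nat.card (globalStab O φ)))⁻¹ : ℝ) : ℂ)
        * (((Real.sqrt ((Fintype.card G) ^ n * Nat.card (globalStab O φ)))⁻¹ : ℝ) : ℂ)
      = ((((Fintype.card G : ℝ) ^ n * (Nat.card (globalStab O φ) : ℝ))⁻¹ : ℝ) : ℂ) := by
    rw [← Complex.ofReal_mul, ← mul_inv, Real.mul_self_sqrt hqnn]
  have e1 : rhoA (Psi O φ) A x y
      = (((Real.sqrt ((Fintype.card G) ^ n * Nat.card (globalStab O φ)))⁻¹ : ℝ) : ℂ)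
        * (((Real.sqrt ((Fintype.card G) ^ n * Nat.card (globalStab O φ)))⁻¹ : ℝ) : ℂ)
        * ∑ t : Fin n → G, ∑ s : Fin n → G,
            ∑ zB : (k : { k : Fin m // k ∉ A }) → ι k.1,
              actVec O φ t (glue A x zB)
                * (starRingEnd ℂ) (actVec O φ s (glue A y zB)) :=
    rhoA_scaled_entry A _ (actVec O φ) x y
  rw [e1]
  simp_rw [sum_glue_factor hO hφ horth A]
  have hmain : (∑ t : Fin n → G, ∑ s : Fin n → G,
      ((∏ k : { k : Fin m // k ∈ A }, ((O k.1 t).mulVec (φ k.1)) (x k))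
        * ∏ k : { k : Fin m // k ∈ A }, (starRingEnd ℂ) (((O k.1 s).mulVec (φ k.1)) (y k)))
      * (if (∀ k : { k : Fin m // k ∉ A },
            (O k.1 s).mulVec (φ k.1) = (O k.1 t).mulVec (φ k.1)) then 1 else 0))
      = ∑ t : Fin n → G, ∑ v : Fin n → G,
          if v ∈ localStab O φ Aᶜ then
            (∏ k : { k : Fin m // k ∈ A }, ((O k.1 t).mulVec (φ k.1)) (x k))
              * ∏ k : { k : Fin m // k ∈ A },
                  ∑ q : ι k.1, (starRingEnd ℂ) (φ k.1 q) * O k.1 (v * t⁻¹) q (y k)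
          else 0 := by
    refine Finset.sum_congr rfl fun t _ => ?_
    rw [reidx t (fun s =>
      ((∏ k : { k : Fin m // k ∈ A }, ((O k.1 t).mulVec (φ k.1)) (x k))
        * ∏ k : { k : Fin m // k ∈ A }, (starRingEnd ℂ) (((O k.1 s).mulVec (φ k.1)) (y k)))
      * (if (∀ k : { k : Fin m // k ∉ A },
            (O k.1 s).mulVec (φ k.1) = (O k.1 t).mulVec (φ k.1)) then 1 else 0))]
    refine Finset.sum_congr rfl fun v _ => ?_
    have hgv : (t * v⁻¹)⁻¹ * t = v := by
      rw [mul_inv_rev, inv_inv, mul_assoc, inv_mul_cancel, mul_one]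
    have hδ : (∀ k : { k : Fin m // k ∉ A },
        (O k.1 (t * v⁻¹)).mulVec (φ k.1) = (O k.1 t).mulVec (φ k.1))
        ↔ v ∈ localStab O φ Aᶜ := by
      rw [hsub (fun k => (O k (t * v⁻¹)).mulVec (φ k) = (O k t).mulVec (φ k))]
      rw [cond_iff hO (t * v⁻¹) t Aᶜ, hgv]
      exact (mem_localStab_iff hO hφ horth Aᶜ v).symm
    have hCP : (∏ k : { k : Fin m // k ∈ A },
          (starRingEnd ℂ) (((O k.1 (t * v⁻¹)).mulVec (φ k.1)) (y k)))
        = ∏ k : { k : Fin m // k ∈ A },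
            ∑ q : ι k.1, (starRingEnd ℂ) (φ k.1 q) * O k.1 (v * t⁻¹) q (y k) := by
      refine Finset.prod_congr rfl fun k _ => ?_
      rw [conj_mulVec_apply hO, mul_inv_rev, inv_inv]
    show ((∏ k : { k : Fin m // k ∈ A }, ((O k.1 t).mulVec (φ k.1)) (x k))
        * ∏ k : { k : Fin m // k ∈ A },
            (starRingEnd ℂ) (((O k.1 (t * v⁻¹)).mulVec (φ k.1)) (y k)))
      * (if (∀ k : { k : Fin m // k ∉ A },
            (O k.1 (t * v⁻¹)).mulVec (φ k.1) = (O k.1 t).mulVec (φ k.1)) then 1 else 0) = _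
    rw [hCP]
    by_cases hv : v ∈ localStab O φ Aᶜ
    · rw [if_pos (hδ.mpr hv), if_pos hv, mul_one]
    · rw [if_neg (fun hc => hv (hδ.mp hc)), if_neg hv, mul_zero]
  rw [hmain, hcc]
  rw [Matrix.smul_apply, smul_eq_mul, Matrix.sum_apply]
  congr 1
  refine Finset.sum_congr rfl fun u _ => ?_
  rw [Matrix.sum_apply, Finset.sum_filter]
  refine Finset.sum_congr rfl fun v _ => ?_
  by_cases hv : v ∈ localStab O φ Aᶜ
  · rw [if_pos hv, if_pos hv, triple_entry, OA_mulVec_phiA, phiA_vecMul_OA]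
  · rw [if_neg hv, if_neg hv]


end GenForm
end
end
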